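/- Let R = K[x] and P_n the two-term complex R --x^n--> R in degrees -1, 0. For positive integers l, m, n and indices max(0, m-l) ≤ i < m, max(0, n-m) ≤ j < n, the composition x^j_{m,n} ∘ x^i_{l,m} in K^b(proj R) equals x^{i+j}_{l,n} if i+j < n, and equals 0 otherwise. -/

import Mathlib

/- Setup: `R = K[x]`, the two-term cochain complexes `P n = (R --x^n--> R)` in degrees
`-1, 0`, and the morphisms `x^i_{m,n}` and `y^i_{m,n}` in the bounded homotopy category
`K^b(proj R)` (realized inside the homotopy category of cochain complexes of
`R`-modules). -/

noncomputable section
open CategoryTheory CategoryTheory.Limits Polynomial ZeroObject CategoryTheory.Pretriangulated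

variable (K : Type) [Field K]

abbrev RMod := ModuleCat.of (Polynomial K) (Polynomial K)

/-- Multiplication by `x^a` on `R = K[x]`. -/
def mulX (a : ℕ) : RMod K ⟶ RMod K :=
  ModuleCat.ofHom (LinearMap.mulLeft (Polynomial K) ((X : Polynomial K) ^ a))

lemma mulX_comp (a b : ℕ) : mulX K a ≫ mulX K b = mulX K (a + b) := by
  apply ModuleCat.hom_ext; apply LinearMap.ext; intro x
  simp [mulX, pow_add]; ring

/-- The graded pieces of the two-term complexes `P n`. -/
def Pobj : ℤ → ModuleCat (Polynomial K) := fun i =>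
  if i = -1 ∨ i = 0 then RMod K else ModuleCat.of (Polynomial K) PUnit

lemma PobjNeg : Pobj K (-1) = RMod K := by simp [Pobj]
lemma PobjZero : Pobj K 0 = RMod K := by simp [Pobj]

/-- The differential of `P n`. -/
def Pd (n : ℕ) : ∀ i : ℤ, Pobj K i ⟶ Pobj K (i + 1) := fun i =>
  if h : i = -1 then
    eqToHom (by rw [h, PobjNeg]) ≫ mulX K n ≫ eqToHom (by rw [h]; norm_num [PobjZero])
  else 0

/-- The two-term complex `P n = (R --x^n--> R)` in degrees `-1, 0`. -/
def P (n : ℕ) : CochainComplex (ModuleCat (Polynomial K)) ℤ :=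
  CochainComplex.of (Pobj K) (Pd K n) (fun i => by
    by_cases h : i = -1
    · have h2 : Pd K n (i + 1) = 0 := dif_neg (by omega)
      rw [h2, Limits.comp_zero]
    · have h1 : Pd K n i = 0 := dif_neg h
      rw [h1, Limits.zero_comp])

lemma P_d_eq_zero (n : ℕ) (i j : ℤ) (hi : i ≠ -1) : (P K n).d i j = 0 := by
  by_cases h : i + 1 = j
  · subst h
    show CochainComplex.of.d (Pobj K) (Pd K n) i (i + 1) = 0
    rw [CochainComplex.of_d]
    exact dif_neg hi
  · exact HomologicalComplex.shape _ _ _ (by simpa using h)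

/-- The components of the chain map which is multiplication by `x^a` in degree `-1`
and by `x^b` in degree `0`. -/
def xComp (a b : ℕ) : ∀ i : ℤ, Pobj K i ⟶ Pobj K i := fun i =>
  if h : i = -1 then eqToHom (by rw [h, PobjNeg]) ≫ mulX K a ≫ eqToHom (by rw [h, PobjNeg])
  else if h0 : i = 0 then
    eqToHom (by rw [h0, PobjZero]) ≫ mulX K b ≫ eqToHom (by rw [h0, PobjZero])
  else 0

/-- The chain map `P m ⟶ P n` which is multiplication by `x^a` in degree `-1` and by
`x^b` in degree `0`; it commutes with the differentials since `a + n = b + m`. -/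
def xMap (m n a b : ℕ) (hab : a + n = b + m) : P K m ⟶ P K n :=
  CochainComplex.ofHom (X := P K m) (Y := P K n) (xComp K a b) (by
    intro i
    simp only [P, CochainComplex.of_d]
    by_cases hi : i = -1
    · subst hi
      show xComp K a b (-1) ≫ Pd K n (-1) = Pd K m (-1) ≫ xComp K a b (-1 + 1)
      rw [show xComp K a b (-1 + 1) = xComp K a b 0 from rfl]
      rw [show xComp K a b (-1) = eqToHom (PobjNeg K) ≫ mulX K a ≫ eqToHom (PobjNeg K).symm
          from dif_pos rfl]
      rw [show xComp K a b 0 = eqToHom (PobjZero K) ≫ mulX K b ≫ eqToHom (PobjZero K).symm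
          from by rw [xComp, dif_neg (by norm_num), dif_pos rfl]]
      rw [show Pd K n (-1) = eqToHom (PobjNeg K) ≫ mulX K n ≫
            eqToHom (by norm_num [PobjZero] : RMod K = Pobj K (-1 + 1))
          from dif_pos rfl]
      rw [show Pd K m (-1) = eqToHom (PobjNeg K) ≫ mulX K m ≫
            eqToHom (by norm_num [PobjZero] : RMod K = Pobj K (-1 + 1))
          from dif_pos rfl]
      simp only [Category.assoc, eqToHom_trans_assoc, eqToHom_refl, Category.id_comp]
      try simp only [Category.comp_id]
      rw [← Category.assoc (mulX K a), ← Category.assoc (mulX K m), mulX_comp, mulX_comp, hab,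
        Nat.add_comm b m]
    · have h1 : Pd K m i = 0 := dif_neg hi
      have h2 : Pd K n i = 0 := dif_neg hi
      rw [h1, h2, Limits.comp_zero, Limits.zero_comp])

/-- The components of `y^i_{m,n}`. -/
def yComp (m n a : ℕ) : ∀ i : ℤ, (P K m).X i ⟶ ((P K n)⟦(1 : ℤ)⟧).X i := fun i =>
  if h : i = -1 then
    eqToHom (by rw [h]; exact PobjNeg K) ≫ mulX K a ≫
      eqToHom (by rw [h]; show RMod K = Pobj K (-1 + 1); norm_num [PobjZero])
  else 0

/-- The chain map `P m ⟶ (P n)⟦1⟧` whose only nonzero component is multiplication by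
`x^a` in degree `-1` (landing in the degree `0` part of `P n`). -/
def yMap (m n a : ℕ) : P K m ⟶ (P K n)⟦(1 : ℤ)⟧ where
  f := yComp K m n a
  comm' := fun i j hij => by
    have hj : i + 1 = j := hij
    have hY : ∀ i' j' : ℤ, i' ≠ -2 → ((P K n)⟦(1 : ℤ)⟧).d i' j' = 0 := fun i' j' h => by
      rw [CochainComplex.shiftFunctor_obj_d',
        P_d_eq_zero K n _ _ (by change i' + 1 ≠ -1; omega), smul_zero]
      rfl
    by_cases hi : i = -1
    · rw [hY i j (by omega), Limits.comp_zero,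
        show yComp K m n a j = 0 from dif_neg (by omega), Limits.comp_zero]
    · rw [show yComp K m n a i = 0 from dif_neg hi, Limits.zero_comp]
      by_cases hj' : j = -1
      · rw [P_d_eq_zero K m i j hi, Limits.zero_comp]
      · rw [show yComp K m n a j = 0 from dif_neg hj', Limits.comp_zero]

/-- The homotopy category of cochain complexes of `K[x]`-modules, in which the bounded
homotopy category of finitely generated projectives embeds fully faithfully. -/
abbrev KbT := HomotopyCategory (ModuleCat (Polynomial K)) (ComplexShape.up ℤ)

abbrev Q : CochainComplex (ModuleCat (Polynomial K)) ℤ ⥤ KbT K :=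
  HomotopyCategory.quotient _ _

/-- `P n` as an object of the homotopy category. -/
abbrev Pbar (n : ℕ) : KbT K := (Q K).obj (P K n)

/-- The morphism `x^i_{m,n} : P m ⟶ P n` in the homotopy category, defined for
`max (0, n - m) ≤ i` (expressed with truncated subtraction on `ℕ`); in degree `-1` it is
multiplication by `x^(i+m-n)` and in degree `0` multiplication by `x^i`. -/
def xbar (m n i : ℕ) (h : n - m ≤ i) : Pbar K m ⟶ Pbar K n :=
  (Q K).map (xMap K m n (i + m - n) i (by omega))

/-- The identification `Q(P n ⟦1⟧) ≅ (Q (P n))⟦1⟧` in the homotopy category. -/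
def shIso (n : ℕ) : (Q K).obj ((P K n)⟦(1 : ℤ)⟧) ≅ (Pbar K n)⟦(1 : ℤ)⟧ :=
  ((Q K).commShiftIso (1 : ℤ)).app (P K n)

/-- The morphism `y^i_{m,n} : P m ⟶ (P n)[1]` in the homotopy category, defined for
`i ≤ m`; its only nonzero component is multiplication by `x^(m-i)` in degree `-1`. -/
def ybar (m n i : ℕ) (_h : i ≤ m) : Pbar K m ⟶ (Pbar K n)⟦(1 : ℤ)⟧ :=
  (Q K).map (yMap K m n (m - i)) ≫ (shIso K n).hom

lemma mulX_comp' (a b : ℕ) {Z : ModuleCat (Polynomial K)} (h : RMod K ⟶ Z) :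
    mulX K a ≫ mulX K b ≫ h = mulX K (a + b) ≫ h := by
  rw [← Category.assoc, mulX_comp]

lemma xComp_comp (a b a' b' : ℕ) (i : ℤ) :
    xComp K a b i ≫ xComp K a' b' i = xComp K (a + a') (b + b') i := by
  unfold xComp
  split_ifs
  · simp [mulX_comp, mulX_comp']
  · simp [mulX_comp, mulX_comp']
  · simp

lemma xMap_f (m n a b : ℕ) (hab : a + n = b + m) (i : ℤ) :
    (xMap K m n a b hab).f i = xComp K a b i := rfl

lemma xMap_comp (l m n a b a' b' a'' b'' : ℕ)
    (hab : a + m = b + l) (hab' : a' + n = b' + m) (hab'' : a'' + n = b'' + l)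
    (ha : a + a' = a'') (hb : b + b' = b'') :
    xMap K l m a b hab ≫ xMap K m n a' b' hab' = xMap K l n a'' b'' hab'' := by
  subst ha hb
  apply HomologicalComplex.hom_ext
  intro i
  exact xComp_comp K a b a' b' i

lemma P_X (n : ℕ) (i : ℤ) : (P K n).X i = Pobj K i := rfl

lemma P_d_neg_one (n : ℕ) :
    (P K n).d (-1) 0 = eqToHom (PobjNeg K) ≫ mulX K n ≫
      eqToHom (by norm_num [PobjZero] : RMod K = Pobj K (-1 + 1)) := by
  show CochainComplex.of.d (Pobj K) (Pd K n) (-1) (-1 + 1) = _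
  rw [CochainComplex.of_d]
  exact dif_pos rfl

/-- When `n ≤ b`, the map `xMap K l n a b` is null-homotopic. -/
def xMapNullHomotopy (l n a b : ℕ) (hab : a + n = b + l) (hb : n ≤ b) :
    Homotopy (xMap K l n a b hab) 0 where
  hom i j :=
    if h : i = 0 ∧ j = -1 then
      eqToHom (by rw [h.1]; exact PobjZero K) ≫ mulX K (b - n) ≫
        eqToHom (by rw [h.2]; exact (PobjNeg K).symm)
    else 0
  zero i j hij := by
    beta_reduce
    rw [dif_neg]
    rintro ⟨rfl, rfl⟩
    exact hij rfl
  comm i := by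
    by_cases h0 : i = 0
    · subst h0
      rw [dNext_eq _ (show (ComplexShape.up ℤ).Rel 0 1 by simp),
        prevD_eq _ (show (ComplexShape.up ℤ).Rel (-1) 0 by simp)]
      rw [dif_neg (by norm_num), Limits.comp_zero, dif_pos ⟨rfl, rfl⟩]
      rw [P_d_neg_one]
      show xComp K a b 0 = _
      rw [show xComp K a b 0 = eqToHom (PobjZero K) ≫ mulX K b ≫ eqToHom (PobjZero K).symm
          from by rw [xComp, dif_neg (by norm_num), dif_pos rfl]]
      simp only [HomologicalComplex.zero_f, add_zero, zero_add, Category.assoc,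
        eqToHom_trans_assoc, eqToHom_refl, Category.id_comp, mulX_comp]
      show eqToHom (PobjZero K) ≫ mulX K b ≫ eqToHom (PobjZero K).symm =
        (eqToHom (PobjZero K) ≫ mulX K (b - n) ≫ eqToHom (PobjNeg K).symm) ≫ eqToHom (PobjNeg K) ≫
          mulX K n ≫ eqToHom (by norm_num [PobjZero] : RMod K = Pobj K (-1 + 1))
      rw [Category.assoc]
      simp only [Category.assoc, eqToHom_trans_assoc, eqToHom_refl, Category.id_comp, mulX_comp',
        show b - n + n = b by omega]
    · by_cases h1 : i = -1
      · subst h1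
        rw [dNext_eq _ (show (ComplexShape.up ℤ).Rel (-1) 0 by simp),
          prevD_eq _ (show (ComplexShape.up ℤ).Rel (-2) (-1) by simp)]
        rw [dif_pos ⟨rfl, rfl⟩, dif_neg (by norm_num), Limits.zero_comp]
        rw [P_d_neg_one]
        show xComp K a b (-1) = _
        rw [show xComp K a b (-1) = eqToHom (PobjNeg K) ≫ mulX K a ≫ eqToHom (PobjNeg K).symm
          from dif_pos rfl]
        simp only [HomologicalComplex.zero_f, add_zero, Category.assoc,
          eqToHom_trans_assoc, eqToHom_refl, Category.id_comp, Category.comp_id]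
        show eqToHom (PobjNeg K) ≫ mulX K a ≫ eqToHom (PobjNeg K).symm =
          (eqToHom (PobjNeg K) ≫ mulX K l ≫
            eqToHom (by norm_num [PobjZero] : RMod K = Pobj K (-1 + 1))) ≫
            eqToHom (by norm_num [PobjZero] : Pobj K (-1 + 1) = RMod K) ≫ mulX K (b - n) ≫
              eqToHom (PobjNeg K).symm
        rw [Category.assoc]
        simp only [Category.assoc, eqToHom_trans_assoc, eqToHom_refl, Category.id_comp, mulX_comp',
          show l + (b - n) = a by omega]
      · rw [dNext_eq _ (show (ComplexShape.up ℤ).Rel i (i + 1) by simp),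
          prevD_eq _ (show (ComplexShape.up ℤ).Rel (i - 1) i by simp)]
        rw [dif_neg (by omega), dif_neg (by omega), Limits.comp_zero, Limits.zero_comp]
        show xComp K a b i = _
        rw [xComp, dif_neg h1, dif_neg h0]
        simp
        rfl

/-- for positive `l, m, n` and `max (0, m-l) ≤ i < m`,
`max (0, n-m) ≤ j < n`, the composition `x^j_{m,n} ∘ x^i_{l,m}` equals `x^(i+j)_{l,n}`
if `i + j < n`, and `0` otherwise. -/
theorem xbar_comp_xbar (l m n : ℕ) (hl : 0 < l) (hm : 0 < m) (hn : 0 < n)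
    (i j : ℕ) (hi : m - l ≤ i) (him : i < m) (hj : n - m ≤ j) (hjn : j < n) :
    xbar K l m i hi ≫ xbar K m n j hj =
      if i + j < n then xbar K l n (i + j) (by omega) else 0 := by
  rw [xbar, xbar, ← Functor.map_comp,
    xMap_comp K l m n (i + l - m) i (j + m - n) j (i + j + l - n) (i + j)
      (by omega) (by omega) (by omega) (by omega) rfl]
  split_ifs with hc
  · rfl
  · rw [HomotopyCategory.eq_of_homotopy _ _
      (xMapNullHomotopy K l n (i + j + l - n) (i + j) (by omega) (by omega))]
    exact (Q K).map_zero _ _
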